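/- Let σ be a C₀-nice measure on ℂ with 0 ∉ supp(σ), and let z ∉ supp(σ). Set d₀ = dist({0,z}, supp(σ)) > 0. Then ∫_ℂ |1/(z−ξ) + 1/ξ| dσ(ξ) ≤ C(C₀)|z|/d₀ for an absolute constant C(C₀) depending only on C₀. -/

import Mathlib

open MeasureTheory Metric

/-- The support of a measure. -/
def msupp (σ : Measure ℂ) : Set ℂ := {z : ℂ | ∀ r : ℝ, 0 < r → 0 < σ (ball z r)}

lemma msupp_compl_null (σ : Measure ℂ) : σ (msupp σ)ᶜ = 0 := by
  apply measure_null_of_locally_null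
  intro x hx
  simp only [msupp, Set.mem_compl_iff, Set.mem_setOf_eq, not_forall] at hx
  obtain ⟨r, hr, hr0⟩ := hx
  push_neg at hr0
  exact ⟨ball x r, Filter.mem_inf_of_left (ball_mem_nhds x hr),
    le_antisymm hr0 zero_le⟩

lemma key (C₀ : ℝ) (hC₀ : 0 < C₀) (σ : Measure ℂ)
    (hσ : ∀ (w : ℂ) (r : ℝ), 0 < r → σ (ball w r) ≤ ENNReal.ofReal (C₀ * r))
    (w : ℂ) (d₀ : ℝ) (hd : 0 < d₀) (hnull : σ (ball w d₀) = 0) :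
    ∫⁻ ξ, ENNReal.ofReal (1 / dist ξ w ^ 2) ∂σ ≤ ENNReal.ofReal (4 * C₀ / d₀) := by
  set f : ℂ → ENNReal := fun ξ => ENNReal.ofReal (1 / dist ξ w ^ 2) with hf
  set A : ℕ → Set ℂ := fun k => ball w (d₀ * 2 ^ (k + 1)) \ ball w (d₀ * 2 ^ k) with hA
  have hcover : (ball w d₀)ᶜ ⊆ ⋃ k, A k := by
    intro x hx
    simp only [Set.mem_compl_iff, mem_ball, not_lt] at hx
    have hex : ∃ k : ℕ, dist x w < d₀ * 2 ^ (k + 1) := by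
      obtain ⟨k, hk⟩ := pow_unbounded_of_one_lt (dist x w / d₀) (one_lt_two (α := ℝ))
      refine ⟨k, ?_⟩
      rw [div_lt_iff₀ hd] at hk
      have : (2:ℝ) ^ k ≤ 2 ^ (k+1) := by
        apply pow_le_pow_right₀ one_le_two (Nat.le_succ k)
      nlinarith
    refine Set.mem_iUnion.2 ⟨Nat.find hex, Nat.find_spec hex, ?_⟩
    simp only [mem_ball, not_lt]
    rcases Nat.eq_zero_or_pos (Nat.find hex) with h0 | h0
    · rw [h0]; simpa using hx
    · have hm := Nat.find_min hex (Nat.sub_lt h0 one_pos)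
      push_neg at hm
      have e : Nat.find hex - 1 + 1 = Nat.find hex := by omega
      rwa [e] at hm
  have step1 : ∫⁻ ξ, f ξ ∂σ = ∫⁻ ξ in (ball w d₀)ᶜ, f ξ ∂σ := by
    rw [Measure.restrict_eq_self_of_ae_mem]
    rw [ae_iff]
    simp only [Set.mem_compl_iff, not_not, Set.setOf_mem_eq]
    exact hnull
  have step2 : ∀ k : ℕ, ∫⁻ ξ in A k, f ξ ∂σ ≤
      ENNReal.ofReal (2 * C₀ / d₀ * (1/2) ^ k) := by
    intro k
    have hpow : (0:ℝ) < d₀ * 2 ^ k := by positivity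
    calc ∫⁻ ξ in A k, f ξ ∂σ
        ≤ ∫⁻ _ in A k, ENNReal.ofReal (1 / (d₀ * 2 ^ k) ^ 2) ∂σ := by
          apply setLIntegral_mono measurable_const
          intro x hx
          apply ENNReal.ofReal_le_ofReal
          have h1 : d₀ * 2 ^ k ≤ dist x w := by
            have := hx.2; simp only [mem_ball, not_lt] at this; exact this
          exact one_div_le_one_div_of_le (by positivity) (pow_le_pow_left₀ hpow.le h1 2)
      _ = ENNReal.ofReal (1 / (d₀ * 2 ^ k) ^ 2) * σ (A k) := setLIntegral_const _ _
      _ ≤ ENNReal.ofReal (1 / (d₀ * 2 ^ k) ^ 2) * ENNReal.ofReal (C₀ * (d₀ * 2 ^ (k+1))) := by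
          gcongr
          exact le_trans (measure_mono Set.diff_subset) (hσ w _ (by positivity))
      _ = ENNReal.ofReal (1 / (d₀ * 2 ^ k) ^ 2 * (C₀ * (d₀ * 2 ^ (k+1)))) := by
          rw [← ENNReal.ofReal_mul (by positivity)]
      _ = ENNReal.ofReal (2 * C₀ / d₀ * (1/2) ^ k) := by
          congr 1
          field_simp
          have h2k : (1/2:ℝ) ^ k * 2 ^ k = 1 := by rw [← mul_pow]; norm_num
          linear_combination (-(2 * (2:ℝ) ^ k)) * h2k
  calc ∫⁻ ξ, f ξ ∂σ = ∫⁻ ξ in (ball w d₀)ᶜ, f ξ ∂σ := step1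
    _ ≤ ∫⁻ ξ in ⋃ k, A k, f ξ ∂σ := lintegral_mono_set hcover
    _ ≤ ∑' k, ∫⁻ ξ in A k, f ξ ∂σ := lintegral_iUnion_le _ _
    _ ≤ ∑' k, ENNReal.ofReal (2 * C₀ / d₀ * (1/2) ^ k) := ENNReal.tsum_le_tsum step2
    _ = ∑' k : ℕ, ENNReal.ofReal (2 * C₀ / d₀) * (ENNReal.ofReal (1/2)) ^ k := by
        congr 1; funext k
        rw [ENNReal.ofReal_mul (by positivity), ENNReal.ofReal_pow (by norm_num)]
    _ = ENNReal.ofReal (2 * C₀ / d₀) * (1 - ENNReal.ofReal (1/2))⁻¹ := by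
        rw [ENNReal.tsum_mul_left, ENNReal.tsum_geometric]
    _ = ENNReal.ofReal (4 * C₀ / d₀) := by
        have : ENNReal.ofReal (1/2 : ℝ) = 2⁻¹ := by
          rw [one_div, ENNReal.ofReal_inv_of_pos (by norm_num), ENNReal.ofReal_ofNat]
        rw [this, ENNReal.one_sub_inv_two, inv_inv]
        rw [← ENNReal.ofReal_ofNat, ← ENNReal.ofReal_mul (by positivity)]
        congr 1; ring

theorem away_from_support_L1 (C₀ : ℝ) (hC₀ : 0 < C₀) :
    ∃ C : ℝ, 0 < C ∧
      ∀ (σ : Measure ℂ),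
        (∀ (w : ℂ) (r : ℝ), 0 < r → σ (ball w r) ≤ ENNReal.ofReal (C₀ * r)) →
        (0 : ℂ) ∉ msupp σ →
        ∀ z : ℂ, z ∉ msupp σ →
        ∀ d₀ : ℝ, 0 < d₀ →
          (∀ ξ ∈ msupp σ, d₀ ≤ dist 0 ξ ∧ d₀ ≤ dist z ξ) →
          ∫⁻ ξ, ENNReal.ofReal ‖(z - ξ)⁻¹ + ξ⁻¹‖ ∂σ ≤
            ENNReal.ofReal (C * ‖z‖ / d₀) := by
  refine ⟨4 * C₀, by positivity, ?_⟩
  intro σ hσ h0 z hz d₀ hd hdist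
  have hae : ∀ᵐ ξ ∂σ, ξ ∈ msupp σ := by
    rw [ae_iff]; exact msupp_compl_null σ
  have null₀ : σ (ball (0:ℂ) d₀) = 0 := by
    refine measure_mono_null (fun ξ hξ => ?_) (msupp_compl_null σ)
    intro hmem
    have := (hdist ξ hmem).1
    rw [mem_ball, dist_comm] at hξ
    linarith
  have nullz : σ (ball z d₀) = 0 := by
    refine measure_mono_null (fun ξ hξ => ?_) (msupp_compl_null σ)
    intro hmem
    have := (hdist ξ hmem).2
    rw [mem_ball, dist_comm] at hξ
    linarith
  set g₀ : ℂ → ENNReal := fun ξ => ENNReal.ofReal (1 / dist ξ (0:ℂ) ^ 2) with hg₀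
  set gz : ℂ → ENNReal := fun ξ => ENNReal.ofReal (1 / dist ξ z ^ 2) with hgz
  have hmeas : Measurable gz := by
    apply Measurable.ennreal_ofReal
    exact ((continuous_id.dist continuous_const).pow 2).measurable.const_div 1
  have hmeas0 : Measurable g₀ := by
    apply Measurable.ennreal_ofReal
    exact ((continuous_id.dist continuous_const).pow 2).measurable.const_div 1
  have hbound : ∀ᵐ ξ ∂σ, ENNReal.ofReal ‖(z - ξ)⁻¹ + ξ⁻¹‖ ≤
      ENNReal.ofReal (‖z‖ / 2) * (g₀ ξ + gz ξ) := by
    filter_upwards [hae] with ξ hξ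
    obtain ⟨h1, h2⟩ := hdist ξ hξ
    have hb0 : 0 < ‖ξ‖ := by
      rw [← dist_zero_left]; exact lt_of_lt_of_le hd h1
    have ha0 : 0 < ‖z - ξ‖ := by
      rw [← dist_eq_norm]; exact lt_of_lt_of_le hd h2
    have hξ0 : ξ ≠ 0 := norm_pos_iff.mp hb0
    have hzξ : z - ξ ≠ 0 := norm_pos_iff.mp ha0
    have heq : (z - ξ)⁻¹ + ξ⁻¹ = z * ((z - ξ) * ξ)⁻¹ := by
      field_simp
      ring
    have hnorm : ‖(z - ξ)⁻¹ + ξ⁻¹‖ = ‖z‖ / (‖z - ξ‖ * ‖ξ‖) := by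
      rw [heq, norm_mul, norm_inv, norm_mul, div_eq_mul_inv]
    have hAM : 1 / (‖z - ξ‖ * ‖ξ‖) ≤ (1 / ‖z - ξ‖ ^ 2 + 1 / ‖ξ‖ ^ 2) / 2 := by
      rw [div_add_div _ _ (by positivity) (by positivity), div_div,
        div_le_div_iff₀ (by positivity) (by positivity)]
      nlinarith [mul_nonneg (mul_pos ha0 hb0).le (sq_nonneg (‖z - ξ‖ - ‖ξ‖))]
    have hd₀ : dist ξ (0:ℂ) = ‖ξ‖ := dist_zero_right ξ
    have hdz : dist ξ z = ‖z - ξ‖ := by rw [dist_eq_norm, norm_sub_rev]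
    simp only [hg₀, hgz, hd₀, hdz, hnorm]
    rw [← ENNReal.ofReal_add (by positivity) (by positivity),
      ← ENNReal.ofReal_mul (by positivity)]
    apply ENNReal.ofReal_le_ofReal
    calc ‖z‖ / (‖z - ξ‖ * ‖ξ‖) = ‖z‖ * (1 / (‖z - ξ‖ * ‖ξ‖)) := by ring
      _ ≤ ‖z‖ * ((1 / ‖z - ξ‖ ^ 2 + 1 / ‖ξ‖ ^ 2) / 2) :=
          mul_le_mul_of_nonneg_left hAM (norm_nonneg z)
      _ = ‖z‖ / 2 * (1 / ‖ξ‖ ^ 2 + 1 / ‖z - ξ‖ ^ 2) := by ring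
  calc ∫⁻ ξ, ENNReal.ofReal ‖(z - ξ)⁻¹ + ξ⁻¹‖ ∂σ
      ≤ ∫⁻ ξ, ENNReal.ofReal (‖z‖ / 2) * (g₀ ξ + gz ξ) ∂σ := lintegral_mono_ae hbound
    _ = ENNReal.ofReal (‖z‖ / 2) * (∫⁻ ξ, g₀ ξ ∂σ + ∫⁻ ξ, gz ξ ∂σ) := by
        rw [lintegral_const_mul' _ _ ENNReal.ofReal_ne_top,
          lintegral_add_left hmeas0]
    _ ≤ ENNReal.ofReal (‖z‖ / 2) *
        (ENNReal.ofReal (4 * C₀ / d₀) + ENNReal.ofReal (4 * C₀ / d₀)) := by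
        gcongr
        · exact key C₀ hC₀ σ hσ 0 d₀ hd null₀
        · exact key C₀ hC₀ σ hσ z d₀ hd nullz
    _ = ENNReal.ofReal (4 * C₀ * ‖z‖ / d₀) := by
        rw [← ENNReal.ofReal_add (by positivity) (by positivity),
          ← ENNReal.ofReal_mul (by positivity)]
        congr 1
        field_simp
        ring
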